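/- If a graph G (finite, undirected; parallel edges and self-loops allowed) has a (2,1)-edge-order (through some edge rt and avoiding some edge ru), then G is 3-edge-connected. -/

import Mathlib

namespace EdgeOrders

variable {V E V' E' : Type}

/-- A multigraph on vertex type `V` and edge type `E` is given by a map `ends`
sending each edge to the unordered pair of its endpoints (self-loops and
parallel edges are allowed).
`IsWalkSeq ends vs es` states that `vs` is the vertex sequence and `es` the
edge sequence of a walk in this multigraph. -/
inductive IsWalkSeq (ends : E → Sym2 V) : List V → List E → Prop
  | nil (v : V) : IsWalkSeq ends [v] []
  | cons {u v : V} {vs : List V} {e : E} {es : List E} :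
      ends e = s(u, v) → IsWalkSeq ends (v :: vs) es →
      IsWalkSeq ends (u :: v :: vs) (e :: es)

/-- There is a walk from `u` to `v` using only edges from `S`. -/
def HasWalk (ends : E → Sym2 V) (S : Set E) (u v : V) : Prop :=
  ∃ vs es, IsWalkSeq ends vs es ∧ vs.head? = some u ∧ vs.getLast? = some v ∧
    ∀ e ∈ es, e ∈ S

/-- A multigraph is `k`-edge-connected if it has at least two vertices and no
edge-cut of size less than `k`: removing fewer than `k` edges leaves all
vertices connected to each other. -/
def EdgeConnected [Fintype V] [Fintype E] (ends : E → Sym2 V) (k : ℕ) : Prop :=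
  2 ≤ Fintype.card V ∧
    ∀ F : Finset E, F.card < k → ∀ u v : V, HasWalk ends {e | e ∉ F} u v

/-- Two edges are neighbors if they share a common vertex. -/
def Neighbors (ends : E → Sym2 V) (e f : E) : Prop :=
  ∃ x, x ∈ ends e ∧ x ∈ ends f

/-- A (1,1)-edge-order through the (non-self-loop) edge `st` with endpoints
`s` and `t`: a (strict) total order `lt` on `E - {st}` such that `m ≥ 2`,
every edge not incident to `s` has a smaller neighbor and every edge not
incident to `t` has a larger neighbor. -/
def IsOneOneEdgeOrder [Fintype E] (ends : E → Sym2 V) (s t : V) (st : E)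
    (lt : E → E → Prop) : Prop :=
  2 ≤ Fintype.card E ∧
  (∀ e f, lt e f → e ≠ st ∧ f ≠ st) ∧
  (∀ e, ¬ lt e e) ∧
  (∀ e f g, lt e f → lt f g → lt e g) ∧
  (∀ e f, e ≠ st → f ≠ st → e ≠ f → lt e f ∨ lt f e) ∧
  (∀ e, e ≠ st → s ∉ ends e → ∃ f, Neighbors ends e f ∧ lt f e) ∧
  (∀ e, e ≠ st → t ∉ ends e → ∃ f, Neighbors ends e f ∧ lt e f)

/-- An ear: a subgraph given as the vertex sequence and edge sequence of a
walk (a path, or a cycle when the first and last vertices coincide). -/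
structure Ear (V E : Type) where
  verts : List V
  edges : List E

/-- An ear decomposition `(P₀, …, P_len)` of the multigraph given by `ends`:
a sequence of ears partitioning the edge set, where `P₀` is a cycle that is
not a self-loop, and each later ear is either a path intersecting the union
of the previous ears exactly in its two endpoints, or a cycle intersecting it
in a unique vertex. -/
structure EarDecomposition (ends : E → Sym2 V) where
  len : ℕ
  ears : Fin (len + 1) → Ear V E
  /-- every ear is a walk in the graph -/
  walk : ∀ i, IsWalkSeq ends (ears i).verts (ears i).edges
  /-- no ear repeats an edge -/
  edges_nodup : ∀ i, (ears i).edges.Nodup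
  /-- the ears partition the edge set -/
  partition : ∀ e : E, ∃! i, e ∈ (ears i).edges
  /-- the ears cover all vertices (their union is the whole graph) -/
  covers : ∀ v : V, ∃ i, v ∈ (ears i).verts
  /-- every ear contains at least one edge -/
  ear_nonempty : ∀ i, (ears i).edges ≠ []
  /-- `P₀` is a cycle … -/
  first_closed : (ears 0).verts.head? = (ears 0).verts.getLast?
  first_nodup : (ears 0).verts.tail.Nodup
  /-- … that is not a self-loop -/
  first_not_loop : 2 ≤ (ears 0).edges.length
  /-- every later ear is a path (distinct vertices) or a cycle (closed, with
  distinct vertices except for the repeated endpoint) -/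
  ear_path_or_cycle : ∀ i : Fin (len + 1), 0 < (i : ℕ) →
    (ears i).verts.Nodup ∨
      ((ears i).verts.head? = (ears i).verts.getLast? ∧ (ears i).verts.tail.Nodup)
  /-- the endpoint(s) of a later ear lie in the union of the previous ears -/
  ear_endpoints : ∀ i : Fin (len + 1), 0 < (i : ℕ) → ∀ x : V,
    ((ears i).verts.head? = some x ∨ (ears i).verts.getLast? = some x) →
      ∃ j, j < i ∧ x ∈ (ears j).verts
  /-- the inner vertices of a later ear avoid all previous ears -/
  ear_inner_new : ∀ i : Fin (len + 1), 0 < (i : ℕ) →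
    ∀ x ∈ (ears i).verts.tail.dropLast, ∀ j, j < i → x ∉ (ears j).verts

variable {ends : E → Sym2 V}

/-- The vertex set of `G_{i-1} = P₀ ∪ ⋯ ∪ P_{i-1}`. -/
def EarDecomposition.prevVerts (D : EarDecomposition ends) (i : Fin (D.len + 1)) : Set V :=
  {x | ∃ j, j < i ∧ x ∈ (D.ears j).verts}

/-- `inner(P_i)`, the set of inner vertices of the `i`-th ear. -/
def EarDecomposition.innerVerts (D : EarDecomposition ends) (i : Fin (D.len + 1)) : Set V :=
  {x | x ∈ (D.ears i).verts ∧ x ∉ D.prevVerts i}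

/-- The edge set `E - E_i` of `\overline{G_i}`. -/
def EarDecomposition.remEdges (D : EarDecomposition ends) (i : Fin (D.len + 1)) : Set E :=
  {e | ∃ j, i < j ∧ e ∈ (D.ears j).edges}

/-- `birth(e)`: the index of the unique ear containing the edge `e`. -/
noncomputable def EarDecomposition.birthE (D : EarDecomposition ends) (e : E) :
    Fin (D.len + 1) := (D.partition e).exists.choose

open Classical in
/-- `last(v)`: the maximal index `birth(vw)` over all edges `vw` incident to `v`. -/
noncomputable def EarDecomposition.lastV [Fintype E] (D : EarDecomposition ends) (v : V) : ℕ :=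
  (Finset.univ.filter fun e => v ∈ ends e).sup fun e => (D.birthE e : ℕ)

/-- The vertices of the subgraph induced by the edge set `S`. -/
def coverVerts (ends : E → Sym2 V) (S : Set E) : Set V :=
  {v | ∃ e ∈ S, v ∈ ends e}

/-- The subgraph induced by the edge set `S` is connected. -/
def ConnectedOn (ends : E → Sym2 V) (S : Set E) : Prop :=
  ∀ u ∈ coverVerts ends S, ∀ v ∈ coverVerts ends S, HasWalk ends S u v

/-- Definition 4.1: `D` is a (2,1)-edge-order through `rt` avoiding `ru`:
(1) `rt ∈ P₀`; (2) the last ear is the short ear `ru`; (3) non-separateness: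
for every `i < m - n`, `\overline{G_i}` contains all inner vertices of `P_i`
and, if `P_i` is short, at least one endpoint of `P_i`. -/
def IsTwoOneEdgeOrder (D : EarDecomposition ends) (rt ru : E) : Prop :=
  rt ∈ (D.ears 0).edges ∧
  (D.ears (Fin.last D.len)).edges = [ru] ∧
  ∀ i : Fin (D.len + 1), (i : ℕ) < D.len →
    (∀ x ∈ D.innerVerts i, x ∈ coverVerts ends (D.remEdges i)) ∧
    ((D.ears i).edges.length = 1 →
      ∃ x, ((D.ears i).verts.head? = some x ∨ (D.ears i).verts.getLast? = some x) ∧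
        x ∈ coverVerts ends (D.remEdges i))

open Classical in
/-- The degree of a vertex in a multigraph; self-loops count twice. -/
noncomputable def degree [Fintype E] (ends : E → Sym2 V) (v : V) : ℕ :=
  ∑ e : E, (if ends e = s(v, v) then 2 else if v ∈ ends e then 1 else 0)

/-- `T` is the edge set of a tree on the vertex set `W`: all its edges join
vertices of `W`, it connects any two vertices of `W`, and it contains no
nonempty closed trail (i.e. no cycle). -/
def IsTreeOn (ends : E → Sym2 V) (W : Set V) (T : Set E) : Prop :=
  (∀ e ∈ T, ∀ x, x ∈ ends e → x ∈ W) ∧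
  (∀ u ∈ W, ∀ v ∈ W, HasWalk ends T u v) ∧
  (∀ vs es, IsWalkSeq ends vs es → (∀ e ∈ es, e ∈ T) → es.Nodup →
    vs.head? = vs.getLast? → es = [])

/-- `T` is the edge set of a spanning tree of the whole multigraph. -/
def IsSpanningTree (ends : E → Sym2 V) (T : Set E) : Prop :=
  IsTreeOn ends Set.univ T

/-- `(vs, es)` is a (simple) path from `x` to `r` using only edges of `T`. -/
def IsPathIn (ends : E → Sym2 V) (T : Set E) (x r : V)
    (vs : List V) (es : List E) : Prop :=
  IsWalkSeq ends vs es ∧ vs.Nodup ∧ vs.head? = some x ∧ vs.getLast? = some r ∧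
    ∀ e ∈ es, e ∈ T

/-- The paths from `x` to the common root `r` inside `T₁` and inside `T₂` are
edge-disjoint. -/
def EdgeIndepFrom (ends : E → Sym2 V) (T₁ T₂ : Set E) (r x : V) : Prop :=
  ∀ vs₁ es₁ vs₂ es₂, IsPathIn ends T₁ x r vs₁ es₁ → IsPathIn ends T₂ x r vs₂ es₂ →
    ∀ e ∈ es₁, e ∉ es₂



section AuxLemmas
variable {ends : E → Sym2 V}

lemma IsWalkSeq.ne_nil {vs : List V} {es : List E} (h : IsWalkSeq ends vs es) : vs ≠ [] := by
  cases h <;> simp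

lemma IsWalkSeq.length_eq {vs : List V} {es : List E} (h : IsWalkSeq ends vs es) :
    vs.length = es.length + 1 := by
  induction h with
  | nil v => simp
  | cons he hw ih => simpa using ih

lemma IsWalkSeq.snoc {vs : List V} {es : List E} {x y : V} {e : E}
    (h : IsWalkSeq ends vs es) (hx : vs.getLast? = some x) (he : ends e = s(x, y)) :
    IsWalkSeq ends (vs ++ [y]) (es ++ [e]) := by
  induction h with
  | nil v =>
    simp at hx
    subst hx
    exact .cons he (.nil y)
  | @cons u v vs' e' es' he' hw ih =>
    rw [List.getLast?_cons_cons] at hx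
    exact .cons he' (ih hx)

lemma IsWalkSeq.reverse {vs : List V} {es : List E} (h : IsWalkSeq ends vs es) :
    IsWalkSeq ends vs.reverse es.reverse := by
  induction h with
  | nil v => simpa using IsWalkSeq.nil (ends := ends) v
  | @cons u v vs' e es' he hw ih =>
    have : (u :: v :: vs').reverse = (v :: vs').reverse ++ [u] := by simp
    rw [this]
    have : (e :: es').reverse = es'.reverse ++ [e] := by simp
    rw [this]
    refine ih.snoc ?_ (by rw [he, Sym2.eq_swap])
    rw [List.getLast?_reverse]
    simp

lemma IsWalkSeq.append {vs vs' : List V} {es es' : List E}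
    (h : IsWalkSeq ends vs es) (h' : IsWalkSeq ends vs' es')
    (hll : vs.getLast? = vs'.head?) :
    IsWalkSeq ends (vs ++ vs'.tail) (es ++ es') := by
  induction h with
  | nil v =>
    simp only [List.getLast?_singleton] at hll
    cases h' with
    | nil w => simp at hll; subst hll; simpa using IsWalkSeq.nil (ends := ends) v
    | @cons a b t e t' he hw =>
      simp at hll; subst hll
      simpa using IsWalkSeq.cons he hw
  | @cons u v vs'' e es'' he hw ih =>
    rw [List.getLast?_cons_cons] at hll
    exact .cons he (ih hll)

lemma IsWalkSeq.mem_verts_of_mem_ends {vs : List V} {es : List E}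
    (h : IsWalkSeq ends vs es) {e : E} (he : e ∈ es) {x : V} (hx : x ∈ ends e) :
    x ∈ vs := by
  induction h with
  | nil v => simp at he
  | @cons u v vs' e' es' he' hw ih =>
    rcases List.mem_cons.mp he with rfl | hmem
    · rw [he'] at hx
      rcases Sym2.mem_iff.mp hx with rfl | rfl
      · exact List.mem_cons_self
      · exact List.mem_cons_of_mem _ (List.mem_cons_self)
    · exact List.mem_cons_of_mem _ (ih hmem)

/-- An edge is `P`-crossing if its two endpoints get different `P`-values. -/
def CrossP (P : V → Prop) (ends : E → Sym2 V) (e : E) : Prop :=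
  ∃ x y, ends e = s(x, y) ∧ ¬ (P x ↔ P y)

lemma crossP_iff {P : V → Prop} {e : E} {x y : V} (h : ends e = s(x, y)) :
    CrossP P ends e ↔ ¬ (P x ↔ P y) := by
  constructor
  · rintro ⟨a, b, hab, hne⟩
    rw [h, Sym2.eq_iff] at hab
    rcases hab with ⟨rfl, rfl⟩ | ⟨rfl, rfl⟩
    · exact hne
    · tauto
  · intro hne
    exact ⟨x, y, h, hne⟩

lemma walk_const {P : V → Prop} {vs : List V} {es : List E}
    (h : IsWalkSeq ends vs es) (hc : ∀ e ∈ es, ¬ CrossP P ends e) :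
    ∀ v ∈ vs, ∀ w ∈ vs, (P v ↔ P w) := by
  induction h with
  | nil v => intro a ha b hb; simp at ha hb; subst ha; subst hb; rfl
  | @cons u v vs' e es' he hw ih =>
    have hih := ih (fun e' he' => hc e' (List.mem_cons_of_mem _ he'))
    have huv : P u ↔ P v := by
      have := hc e (List.mem_cons_self)
      rw [crossP_iff he] at this
      tauto
    intro a ha b hb
    rcases List.mem_cons.mp ha with rfl | ha' <;> rcases List.mem_cons.mp hb with rfl | hb'
    · rfl
    · exact huv.trans (hih v (List.mem_cons_self) b hb')
    · exact (hih a ha' v (List.mem_cons_self)).trans huv.symm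
    · exact hih a ha' b hb'

open Classical in
lemma walk_parity {P : V → Prop} {vs : List V} {es : List E}
    (h : IsWalkSeq ends vs es) {a b : V} (ha : vs.head? = some a) (hb : vs.getLast? = some b) :
    ((P a ↔ P b) ↔ Even (es.countP fun e => decide (CrossP P ends e))) := by
  induction h generalizing a with
  | nil v =>
    simp at ha hb; subst ha; subst hb
    simp
  | @cons u v vs' e es' he hw ih =>
    simp only [List.head?_cons, Option.some.injEq] at ha
    cases ha
    rw [List.getLast?_cons_cons] at hb
    have hih := ih rfl hb
    have huv : CrossP P ends e ↔ ¬ (P u ↔ P v) := crossP_iff he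
    by_cases hcr : CrossP P ends e
    · rw [List.countP_cons_of_pos (by simpa using hcr), Nat.even_add_one]
      rw [huv] at hcr
      tauto
    · rw [List.countP_cons_of_neg (by simpa using hcr)]
      rw [huv, not_not] at hcr
      tauto

lemma exists_two_of_two_le_countP {α : Type} {l : List α} {p : α → Bool}
    (h : 2 ≤ l.countP p) (hn : l.Nodup) :
    ∃ x ∈ l, ∃ y ∈ l, x ≠ y ∧ p x ∧ p y := by
  rw [List.countP_eq_length_filter] at h
  obtain ⟨x, y, t, hf⟩ : ∃ x y t, l.filter p = x :: y :: t := by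
    rcases hl : l.filter p with _ | ⟨x, _ | ⟨y, t⟩⟩
    · rw [hl] at h; simp at h
    · rw [hl] at h; simp at h
    · exact ⟨_, _, _, rfl⟩
  have hnf : (l.filter p).Nodup := hn.filter p
  rw [hf] at hnf
  have hx : x ∈ l.filter p := by rw [hf]; simp
  have hy : y ∈ l.filter p := by rw [hf]; simp
  refine ⟨x, (List.mem_filter.mp hx).1, y, (List.mem_filter.mp hy).1, ?_,
    (List.mem_filter.mp hx).2, (List.mem_filter.mp hy).2⟩
  intro hxy
  subst hxy
  simp at hnf


lemma hasWalk_refl (S : Set E) (v : V) : HasWalk ends S v v :=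
  ⟨[v], [], .nil v, rfl, rfl, by simp⟩

lemma hasWalk_symm {S : Set E} {u v : V} (h : HasWalk ends S u v) : HasWalk ends S v u := by
  obtain ⟨vs, es, hw, hh, hl, hs⟩ := h
  exact ⟨vs.reverse, es.reverse, hw.reverse, by rw [List.head?_reverse]; exact hl,
    by rw [List.getLast?_reverse]; exact hh, fun e he => hs e (List.mem_reverse.mp he)⟩

lemma hasWalk_trans {S : Set E} {u v w : V} (h1 : HasWalk ends S u v)
    (h2 : HasWalk ends S v w) : HasWalk ends S u w := by
  obtain ⟨vs, es, hw, hh, hl, hs⟩ := h1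
  obtain ⟨vs', es', hw', hh', hl', hs'⟩ := h2
  refine ⟨vs ++ vs'.tail, es ++ es', hw.append hw' (by rw [hl, hh']), ?_, ?_, ?_⟩
  · obtain ⟨a, t, rfl⟩ : ∃ a t, vs = a :: t := by
      cases hvs : vs with
      | nil => exact absurd hvs hw.ne_nil
      | cons a t => exact ⟨a, t, rfl⟩
    simpa using hh
  · cases htl : vs'.tail with
    | nil =>
      obtain ⟨a, t, rfl⟩ : ∃ a t, vs' = a :: t := by
        cases hvs : vs' with
        | nil => exact absurd hvs hw'.ne_nil
        | cons a t => exact ⟨a, t, rfl⟩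
      simp at htl
      subst htl
      simp only [List.append_nil]
      simp at hh' hl'
      rw [hl, ← hh', hl']
    | cons a t =>
      rw [List.getLast?_append_of_ne_nil _ (by simp), ← htl, ← hl']
      obtain ⟨a', t', rfl⟩ : ∃ a' t', vs' = a' :: t' := by
        cases hvs : vs' with
        | nil => exact absurd hvs hw'.ne_nil
        | cons a' t' => exact ⟨a', t', rfl⟩
      simp only [List.tail_cons] at htl ⊢
      subst htl
      rw [List.getLast?_cons_cons]
  · intro e he
    rcases List.mem_append.mp he with h | h
    · exact hs e h
    · exact hs' e h

end AuxLemmas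

/-- If a multigraph `G` has a (2,1)-edge-order (through some
edge `rt` and avoiding some edge `ru`), then `G` is 3-edge-connected. -/
theorem statement_3 {V E : Type} [Fintype V] [Fintype E] (ends : E → Sym2 V)
    (rt ru : E) (r t u : V)
    (hrt : ends rt = s(r, t)) (hru : ends ru = s(r, u)) (hne : rt ≠ ru)
    (D : EarDecomposition ends) (hD : IsTwoOneEdgeOrder D rt ru) :
    EdgeConnected ends 3 := by
  classical
  obtain ⟨hrt0, hlastE, hcond⟩ := hD
  have hw0 := D.walk 0
  have hlen_pos : 0 < D.len := by
    by_contra h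
    have h0 : D.len = 0 := by omega
    have hl0 : Fin.last D.len = 0 := by
      apply Fin.ext
      simp [h0]
    rw [hl0] at hlastE
    have h2e := D.first_not_loop
    rw [hlastE] at h2e
    simp at h2e
  constructor
  · -- 2 ≤ card V
    obtain ⟨v0, t0, hvs0⟩ : ∃ v0 t0, (D.ears 0).verts = v0 :: t0 := by
      cases h : (D.ears 0).verts with
      | nil => exact absurd h hw0.ne_nil
      | cons a t => exact ⟨a, t, rfl⟩
    have hlen3 : 3 ≤ (D.ears 0).verts.length := by
      have h1 := hw0.length_eq
      have h2 := D.first_not_loop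
      omega
    obtain ⟨v1, t1, ht0⟩ : ∃ v1 t1, t0 = v1 :: t1 := by
      cases h : t0 with
      | nil => rw [hvs0, h] at hlen3; simp at hlen3
      | cons a t => exact ⟨a, t, rfl⟩
    have ht1 : t1 ≠ [] := by
      intro h
      rw [hvs0, ht0, h] at hlen3
      simp at hlen3
    have hnd : (v1 :: t1).Nodup := by
      have := D.first_nodup
      rw [hvs0, ht0] at this
      simpa using this
    have hlm : t1.getLast ht1 ∈ t1 := List.getLast_mem ht1
    have hne' : v1 ≠ t1.getLast ht1 := by
      intro h
      exact (List.nodup_cons.mp hnd).1 (h ▸ hlm)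
    have : 1 < Fintype.card V := Fintype.one_lt_card_iff.mpr ⟨_, _, hne'⟩
    omega
  · intro F hF a b
    by_contra hnr
    set S : Set E := {e | e ∉ F} with hS
    set P : V → Prop := fun v => (HasWalk ends S a v ↔ HasWalk ends S a r) with hP
    have hPr : P r := Iff.rfl
    have hstep : ∀ e, e ∉ F → ∀ x y, ends e = s(x, y) →
        (HasWalk ends S a x ↔ HasWalk ends S a y) := by
      intro e heF x y hexy
      have hw1 : HasWalk ends S x y :=
        ⟨[x, y], [e], .cons hexy (.nil y), rfl, rfl, by simpa [hS] using heF⟩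
      exact ⟨fun h => hasWalk_trans h hw1, fun h => hasWalk_trans h (hasWalk_symm hw1)⟩
    have hcrossF : ∀ e, CrossP P ends e → e ∈ F := by
      rintro e ⟨x, y, hxy, hnxy⟩
      by_contra heF
      have hxy' := hstep e heF x y hxy
      exact hnxy ⟨fun h => Iff.trans hxy'.symm h, fun h => Iff.trans hxy' h⟩
    have hy0 : ∃ y, ¬ P y := by
      by_cases hra : HasWalk ends S a r
      · exact ⟨b, fun hPb => hnr (hPb.mpr hra)⟩
      · exact ⟨a, fun hPa => hra (hPa.mp (hasWalk_refl S a))⟩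
    obtain ⟨y0, hy0⟩ := hy0
    set EY : Finset (Fin (D.len + 1)) :=
      Finset.univ.filter (fun j => ∃ v ∈ (D.ears j).verts, ¬ P v) with hEY
    have hEYspec : ∀ j, j ∈ EY ↔ ∃ v ∈ (D.ears j).verts, ¬ P v := by
      intro j; simp [hEY]
    have hEYne : EY.Nonempty := by
      obtain ⟨j, hj⟩ := D.covers y0
      exact ⟨j, (hEYspec j).mpr ⟨y0, hj, hy0⟩⟩
    set j0 := EY.min' hEYne with hj0def
    set K := EY.max' hEYne with hKdef
    have hj0mem : j0 ∈ EY := EY.min'_mem _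
    have hKmem : K ∈ EY := EY.max'_mem _
    have hnotY : ∀ j, j < j0 → ∀ v ∈ (D.ears j).verts, P v := by
      intro j hj v hv
      by_contra hPv
      exact absurd (EY.min'_le j ((hEYspec j).mpr ⟨v, hv, hPv⟩)) (not_le.mpr hj)
    have hrin0 : r ∈ (D.ears 0).verts :=
      hw0.mem_verts_of_mem_ends hrt0 (by rw [hrt]; exact Sym2.mem_iff.mpr (Or.inl rfl))
    -- ear j0 walk endpoints
    have hwj0 := D.walk j0
    obtain ⟨c0, ct, hc⟩ : ∃ c0 ct, (D.ears j0).verts = c0 :: ct := by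
      cases h : (D.ears j0).verts with
      | nil => exact absurd h hwj0.ne_nil
      | cons a t => exact ⟨a, t, rfl⟩
    have hhead : (D.ears j0).verts.head? = some c0 := by rw [hc]; rfl
    have hlastv : (D.ears j0).verts.getLast? =
        some ((D.ears j0).verts.getLast hwj0.ne_nil) :=
      List.getLast?_eq_getLast _
    set cl := (D.ears j0).verts.getLast hwj0.ne_nil with hcl
    have hend0 : (j0 : ℕ) ≠ 0 → ∀ x,
        ((D.ears j0).verts.head? = some x ∨ (D.ears j0).verts.getLast? = some x) → P x := by
      intro hpos x hx
      obtain ⟨j, hj, hm⟩ := D.ear_endpoints j0 (Nat.pos_of_ne_zero hpos) x hx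
      exact hnotY j hj x hm
    have hPhl : P c0 ↔ P cl := by
      by_cases h0 : (j0 : ℕ) = 0
      · have hj00 : j0 = 0 := Fin.ext (by simpa using h0)
        have := D.first_closed
        rw [← hj00] at this
        rw [hhead, hlastv] at this
        have : c0 = cl := by injection this
        rw [this]
      · exact iff_of_true (hend0 h0 c0 (Or.inl hhead)) (hend0 h0 cl (Or.inr hlastv))
    have hXj0 : ∃ x ∈ (D.ears j0).verts, P x := by
      by_cases h0 : (j0 : ℕ) = 0
      · have hj00 : j0 = 0 := Fin.ext (by simpa using h0)
        exact ⟨r, by rw [hj00]; exact hrin0, hPr⟩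
      · exact ⟨c0, by rw [hc]; exact List.mem_cons_self, hend0 h0 c0 (Or.inl hhead)⟩
    obtain ⟨yY, hyYmem, hyYn⟩ := (hEYspec j0).mp hj0mem
    have heven : Even ((D.ears j0).edges.countP fun e => decide (CrossP P ends e)) :=
      (walk_parity hwj0 hhead hlastv).mp hPhl
    have h2cnt : 2 ≤ (D.ears j0).edges.countP fun e => decide (CrossP P ends e) := by
      rcases Nat.eq_zero_or_pos ((D.ears j0).edges.countP fun e => decide (CrossP P ends e))
        with h | h
      · exfalso
        have hz : ∀ e ∈ (D.ears j0).edges, ¬ CrossP P ends e := by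
          intro e he hcr
          exact (List.countP_eq_zero.mp h e he) (decide_eq_true hcr)
        obtain ⟨x, hxm, hPx⟩ := hXj0
        exact hyYn ((walk_const hwj0 hz yY hyYmem x hxm).mpr hPx)
      · obtain ⟨k, hk⟩ := heven
        omega
    obtain ⟨e1, he1mem, e2, he2mem, hne12, hd1, hd2⟩ :=
      exists_two_of_two_le_countP h2cnt (D.edges_nodup j0)
    have hc1 : CrossP P ends e1 := of_decide_eq_true hd1
    have hc2 : CrossP P ends e2 := of_decide_eq_true hd2
    have hFeq : F = {e1, e2} := by
      refine (Finset.eq_of_subset_of_card_le ?_ ?_).symm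
      · intro x hx
        rcases Finset.mem_insert.mp hx with rfl | hx
        · exact hcrossF _ hc1
        · rw [Finset.mem_singleton] at hx
          subst hx
          exact hcrossF _ hc2
      · rw [Finset.card_pair hne12]
        omega
    have hcross_loc : ∀ k : Fin (D.len + 1), ∀ e ∈ (D.ears k).edges,
        CrossP P ends e → k = j0 := by
      intro k e he hcr
      have heF := hcrossF e hcr
      rw [hFeq] at heF
      have hej0 : e ∈ (D.ears j0).edges := by
        rcases Finset.mem_insert.mp heF with rfl | h
        · exact he1mem
        · rw [Finset.mem_singleton] at h; subst h; exact he2mem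
      obtain ⟨i, hi, huniq⟩ := D.partition e
      exact (huniq k he).trans (huniq j0 hej0).symm
    have hj0last : j0 ≠ Fin.last D.len := by
      intro h
      rw [h, hlastE] at he1mem he2mem
      simp at he1mem he2mem
      exact hne12 (he1mem.trans he2mem.symm)
    have hlast_noY : Fin.last D.len ∉ EY := by
      intro hmem'
      obtain ⟨v, hvmem, hvn⟩ := (hEYspec _).mp hmem'
      have hnc : ∀ e ∈ (D.ears (Fin.last D.len)).edges, ¬ CrossP P ends e :=
        fun e he hcr => hj0last ((hcross_loc _ e he hcr) ▸ rfl)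
      have hrlast : r ∈ (D.ears (Fin.last D.len)).verts :=
        (D.walk _).mem_verts_of_mem_ends (by rw [hlastE]; exact List.mem_cons_self)
          (by rw [hru]; exact Sym2.mem_iff.mpr (Or.inl rfl))
      exact hvn ((walk_const (D.walk _) hnc v hvmem r hrlast).mpr hPr)
    have hKlt : (K : ℕ) < D.len := by
      have h1 := K.isLt
      have h2 : K ≠ Fin.last D.len := fun h => hlast_noY (h ▸ hKmem)
      have h3 : (K : ℕ) ≠ D.len := by
        intro h
        exact h2 (Fin.ext (by rw [h, Fin.val_last]))
      omega
    have hcondK := hcond K hKlt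
    have hnocover : ∀ x, ¬ P x → x ∉ coverVerts ends (D.remEdges K) := by
      rintro x hx ⟨e, he, hxe⟩
      obtain ⟨k', hk', hek'⟩ := he
      have hxv : x ∈ (D.ears k').verts := (D.walk k').mem_verts_of_mem_ends hek' hxe
      have : k' ∈ EY := (hEYspec k').mpr ⟨x, hxv, hx⟩
      exact absurd (EY.le_max' k' this) (not_le.mpr hk')
    by_cases hKj0 : K = j0
    · by_cases h0 : (j0 : ℕ) = 0
      · have hKinner : yY ∈ D.innerVerts K := by
          constructor
          · rw [hKj0]; exact hyYmem
          · rintro ⟨j, hj, -⟩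
            rw [hKj0] at hj
            have hj0' : j0 = 0 := Fin.ext (by simpa using h0)
            rw [hj0'] at hj
            exact absurd hj (Fin.not_lt_zero j)
        exact hnocover yY hyYn (hcondK.1 yY hKinner)
      · have hPc0 : P c0 := hend0 h0 c0 (Or.inl hhead)
        have hPcl : P cl := hend0 h0 cl (Or.inr hlastv)
        have hct : ct ≠ [] := by
          intro h
          have h1 := hwj0.length_eq
          have h2 := D.ear_nonempty j0
          rw [hc, h] at h1
          simp at h1
          exact h2 h1
        have hyct : yY ∈ ct := by
          rw [hc] at hyYmem
          rcases List.mem_cons.mp hyYmem with rfl | h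
          · exact absurd hPc0 hyYn
          · exact h
        have hclct : cl = ct.getLast hct := by
          rw [hcl]
          have : (D.ears j0).verts.getLast hwj0.ne_nil
              = (c0 :: ct).getLast (by simp) := by
            congr 1 <;> rw [hc]
          rw [this, List.getLast_cons hct]
        have hydrop : yY ∈ (D.ears j0).verts.tail.dropLast := by
          rw [hc]
          simp only [List.tail_cons]
          have hsplit := List.dropLast_append_getLast hct
          rw [← hsplit] at hyct
          rcases List.mem_append.mp hyct with h | h
          · exact h
          · simp at h
            rw [← hclct] at h
            exact absurd (h ▸ hPcl) hyYn
        have hKpos : 0 < (j0 : ℕ) := Nat.pos_of_ne_zero h0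
        have hinner := D.ear_inner_new j0 hKpos yY hydrop
        have hKinner : yY ∈ D.innerVerts K := by
          rw [hKj0]
          exact ⟨hyYmem, fun ⟨j, hj, hm⟩ => hinner j hj hm⟩
        exact hnocover yY hyYn (hcondK.1 yY hKinner)
    · have hKnc : ∀ e ∈ (D.ears K).edges, ¬ CrossP P ends e :=
        fun e he hcr => hKj0 (hcross_loc K e he hcr)
      obtain ⟨yK, hyKmem, hyKn⟩ := (hEYspec K).mp hKmem
      have hallY : ∀ v ∈ (D.ears K).verts, ¬ P v := by
        intro v hv hPv
        exact hyKn ((walk_const (D.walk K) hKnc yK hyKmem v hv).mpr hPv)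
      have hKpos : 0 < (K : ℕ) := by
        rcases Nat.eq_zero_or_pos (K : ℕ) with h | h
        · exfalso
          have hK0 : K = 0 := Fin.ext (by simpa using h)
          exact hallY r (by rw [hK0]; exact hrin0) hPr
        · exact h
      by_cases hlen1 : (D.ears K).edges.length = 1
      · obtain ⟨x, hxe, hxcov⟩ := hcondK.2 hlen1
        have hxv : x ∈ (D.ears K).verts := by
          rcases hxe with h | h
          · exact List.mem_of_mem_head? (Option.mem_def.mpr h)
          · exact List.mem_of_mem_getLast? (Option.mem_def.mpr h)
        exact hnocover x (hallY x hxv) hxcov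
      · have hwK := D.walk K
        have h2e : 2 ≤ (D.ears K).edges.length := by
          have h1 := D.ear_nonempty K
          have h2 : (D.ears K).edges.length ≠ 0 := by
            intro h
            exact h1 (List.length_eq_zero_iff.mp h)
          omega
        have hlenv : 3 ≤ (D.ears K).verts.length := by
          have := hwK.length_eq
          omega
        obtain ⟨d0, d1, dt, hdv, hdt⟩ :
            ∃ d0 d1 dt, (D.ears K).verts = d0 :: d1 :: dt ∧ dt ≠ [] := by
          rcases hv : (D.ears K).verts with _ | ⟨d0, _ | ⟨d1, dt⟩⟩
          · rw [hv] at hlenv; simp at hlenv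
          · rw [hv] at hlenv; simp at hlenv
          · refine ⟨d0, d1, dt, rfl, ?_⟩
            intro h
            rw [hv, h] at hlenv
            simp at hlenv
        have hd1drop : d1 ∈ (D.ears K).verts.tail.dropLast := by
          rw [hdv]
          simp only [List.tail_cons]
          rw [List.dropLast_cons_of_ne_nil hdt]
          exact List.mem_cons_self
        have hd1v : d1 ∈ (D.ears K).verts := by
          rw [hdv]; exact List.mem_cons_of_mem _ (List.mem_cons_self)
        have hinner := D.ear_inner_new K hKpos d1 hd1drop
        have hKinner : d1 ∈ D.innerVerts K :=
          ⟨hd1v, fun ⟨j, hj, hm⟩ => hinner j hj hm⟩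
        exact hnocover d1 (hallY d1 hd1v) (hcondK.1 d1 hKinner)

end EdgeOrders
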